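/- Let n be a power of 2 and let P ⊂ ℝⁿ be the set of 2n−1 unit vectors x_{h,j} = 2^{-h/2} ∑_{i ∈ I_{h,j}} e_i of the Euclidean binary tree structure. Then there exists a 1-navigable directed graph H = (P, E) (under the Euclidean metric) with maximum out-degree O(log n); concretely, the graph consisting of all parent-child edges in the dyadic tree plus edges from each node to each of its ancestors is 1-navigable and has maximum out-degree at most log₂ n + 1. -/

import Mathlib

/-- The dyadic interval `I_{h,j}` (0-indexed `j`) inside `Fin (2^m)`. -/
def dyadicI (m h j : ℕ) : Finset (Fin (2 ^ m)) :=
  Finset.univ.filter fun i => j * 2 ^ h ≤ (i : ℕ) ∧ (i : ℕ) < (j + 1) * 2 ^ h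

/-- The unit vector `x_{h,j} = 2^{-h/2} ∑_{i ∈ I_{h,j}} e_i` in Euclidean space `ℝ^{2^m}`. -/
noncomputable def xvec (m h j : ℕ) : EuclideanSpace ℝ (Fin (2 ^ m)) :=
  WithLp.toLp 2 fun i => if i ∈ dyadicI m h j then (2 : ℝ) ^ (-(h : ℝ) / 2) else 0

/-- Valid index pairs `(h, j)` of the binary-tree pointset: `h ≤ m`, `j < 2^(m-h)`. -/
def BTVertex (m : ℕ) := {p : ℕ × ℕ // p.1 ≤ m ∧ p.2 < 2 ^ (m - p.1)}

/-- Edges: from each node to its two children (one level down, contained interval),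
and from each node to each of its (strict) ancestors. -/
def BTEdge (m : ℕ) (s t : BTVertex m) : Prop :=
  (t.val.1 + 1 = s.val.1 ∧ dyadicI m t.val.1 t.val.2 ⊆ dyadicI m s.val.1 s.val.2) ∨
  dyadicI m s.val.1 s.val.2 ⊂ dyadicI m t.val.1 t.val.2

namespace S4

noncomputable def R (h : ℕ) : ℝ := (2:ℝ) ^ (-(h:ℝ)/2)

lemma R_pos (h : ℕ) : 0 < R h := Real.rpow_pos_of_pos (by norm_num) _

lemma R_sq (h : ℕ) : ((2^h : ℕ) : ℝ) * R h ^ 2 = 1 := by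
  have h1 : ((2^h:ℕ):ℝ) = (2:ℝ) ^ (h:ℝ) := by
    rw [Real.rpow_natCast]; push_cast; ring
  rw [h1, R, ← Real.rpow_natCast ((2:ℝ)^(-(h:ℝ)/2)) 2, ← Real.rpow_mul (by norm_num),
      ← Real.rpow_add (by norm_num)]
  norm_num

lemma pow_mul_R (h : ℕ) : ((2^h : ℕ) : ℝ) * R h = (2:ℝ) ^ ((h:ℝ)/2) := by
  have h1 : ((2^h:ℕ):ℝ) = (2:ℝ) ^ (h:ℝ) := by
    rw [Real.rpow_natCast]; push_cast; ring
  rw [h1, R, ← Real.rpow_add (by norm_num)]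
  ring_nf

lemma div_eq_iff' {i j h : ℕ} : i / 2^h = j ↔ j * 2^h ≤ i ∧ i < (j+1) * 2^h := by
  have hp : 0 < 2^h := pow_pos (by norm_num) h
  constructor
  · rintro rfl
    refine ⟨Nat.div_mul_le_self i _, ?_⟩
    have h3 := Nat.div_add_mod i (2^h)
    have h4 := Nat.mod_lt i hp
    calc i = 2^h*(i/2^h) + i%2^h := h3.symm
      _ < 2^h*(i/2^h) + 2^h := by omega
      _ = (i/2^h+1)*2^h := by ring
  · rintro ⟨h1, h2⟩
    exact Nat.div_eq_of_lt_le h1 h2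

lemma mem_dyadicI {m h j : ℕ} {i : Fin (2^m)} :
    i ∈ dyadicI m h j ↔ (i:ℕ) / 2^h = j := by
  simp [dyadicI, div_eq_iff']

lemma card_dyadicI {m h j : ℕ} (hb : (j+1)*2^h ≤ 2^m) :
    (dyadicI m h j).card = 2^h := by
  have he : dyadicI m h j = Finset.attachFin (Finset.Ico (j*2^h) ((j+1)*2^h))
      (fun x hx => lt_of_lt_of_le (Finset.mem_Ico.mp hx).2 hb) := by
    ext i; simp [dyadicI, Finset.mem_attachFin, Finset.mem_Ico]
  rw [he, Finset.card_attachFin, Nat.card_Ico, add_mul, one_mul, Nat.add_sub_cancel_left]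

lemma dyadic_subset {m h h' j j' : ℕ} (hh : h ≤ h') {i : ℕ}
    (h1 : i / 2^h = j) (h2 : i / 2^h' = j') :
    dyadicI m h j ⊆ dyadicI m h' j' := by
  have key : ∀ a : ℕ, a / 2^h = j → a / 2^h' = j / 2^(h'-h) := by
    intro a ha
    have hp : (2:ℕ)^h' = 2^h * 2^(h'-h) := by rw [← pow_add, Nat.add_sub_cancel' hh]
    rw [hp, ← Nat.div_div_eq_div_mul, ha]
  intro x hx
  rw [mem_dyadicI] at hx ⊢
  rw [key x hx, ← key i h1, h2]

lemma sum_sq_ite {ι : Type*} [Fintype ι] [DecidableEq ι] (A B : Finset ι) (a b : ℝ) :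
    ∑ i, ((if i ∈ A then a else 0) - (if i ∈ B then b else 0))^2
      = (A.card : ℝ) * a^2 + (B.card : ℝ) * b^2 - 2 * ((A ∩ B).card : ℝ) * a * b := by
  have key : ∀ i, ((if i ∈ A then a else 0) - (if i ∈ B then b else 0))^2
      = a^2 * (if i ∈ A then (1:ℝ) else 0) + b^2 * (if i ∈ B then (1:ℝ) else 0)
        - 2*a*b * (if i ∈ A ∩ B then (1:ℝ) else 0) := by
    intro i
    by_cases hA : i ∈ A <;> by_cases hB : i ∈ B <;>
      simp [Finset.mem_inter, hA, hB] <;> ring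
  simp_rw [key]
  rw [Finset.sum_sub_distrib, Finset.sum_add_distrib, ← Finset.mul_sum, ← Finset.mul_sum,
    ← Finset.mul_sum]
  have hf : Finset.filter (fun x => x ∈ A ∧ x ∈ B) Finset.univ = A ∩ B := by
    ext x; simp
  simp [Finset.sum_ite_mem, Finset.univ_inter, hf]
  ring

lemma dist_sq_xvec {m h j h' j' : ℕ} (hb : (j+1)*2^h ≤ 2^m) (hb' : (j'+1)*2^h' ≤ 2^m) :
    dist (xvec m h j) (xvec m h' j') ^ 2
      = 2 - 2 * ((dyadicI m h j ∩ dyadicI m h' j').card : ℝ) * R h * R h' := by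
  rw [EuclideanSpace.dist_eq, Real.sq_sqrt (by positivity)]
  simp only [Real.dist_eq, sq_abs, xvec, PiLp.toLp_apply]
  rw [sum_sq_ite, card_dyadicI hb, card_dyadicI hb']
  have e1 := R_sq h; have e2 := R_sq h'
  simp only [R] at e1 e2 ⊢
  linarith

lemma vert_bound {m : ℕ} (p : BTVertex m) : (p.val.2+1)*2^(p.val.1) ≤ 2^m := by
  obtain ⟨hm, hj⟩ := p.property
  calc (p.val.2+1)*2^(p.val.1) ≤ 2^(m-p.val.1)*2^(p.val.1) := Nat.mul_le_mul_right _ hj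
    _ = 2^m := by rw [← pow_add, Nat.sub_add_cancel hm]

lemma base_lt {m : ℕ} (p : BTVertex m) : p.val.2 * 2^(p.val.1) < 2^m := by
  have hb := vert_bound p
  have hp : 0 < 2^(p.val.1) := pow_pos (by norm_num) _
  calc p.val.2 * 2^(p.val.1) < (p.val.2+1)*2^(p.val.1) := by
        rw [add_mul, one_mul]; omega
    _ ≤ 2^m := hb

lemma base_div {m : ℕ} (p : BTVertex m) : p.val.2 * 2^(p.val.1) / 2^(p.val.1) = p.val.2 :=
  Nat.mul_div_cancel _ (pow_pos (by norm_num) _)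

lemma base_mem {m : ℕ} (p : BTVertex m) :
    (⟨p.val.2 * 2^(p.val.1), base_lt p⟩ : Fin (2^m)) ∈ dyadicI m p.val.1 p.val.2 := by
  rw [mem_dyadicI]; exact base_div p

lemma dyadic_inj {m : ℕ} (p q : BTVertex m)
    (h : dyadicI m p.val.1 p.val.2 = dyadicI m q.val.1 q.val.2) : p = q := by
  have hc : (2:ℕ)^(p.val.1) = 2^(q.val.1) := by
    rw [← card_dyadicI (vert_bound p), ← card_dyadicI (vert_bound q), h]
  have hh : p.val.1 = q.val.1 := Nat.pow_right_injective (le_refl 2) hc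
  have hmem := base_mem p
  rw [h, mem_dyadicI, ← hh] at hmem
  simp only [base_div p] at hmem
  exact Subtype.ext (Prod.ext hh hmem)

/-- common point + level comparison gives containment -/
lemma subset_of_mem_mem {m : ℕ} {p q : BTVertex m} {x : Fin (2^m)}
    (hh : p.val.1 ≤ q.val.1)
    (hp : x ∈ dyadicI m p.val.1 p.val.2) (hq : x ∈ dyadicI m q.val.1 q.val.2) :
    dyadicI m p.val.1 p.val.2 ⊆ dyadicI m q.val.1 q.val.2 :=
  dyadic_subset hh (mem_dyadicI.mp hp) (mem_dyadicI.mp hq)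

lemma key_lt {m : ℕ} (s u t : BTVertex m)
    (h : ((dyadicI m s.val.1 s.val.2 ∩ dyadicI m t.val.1 t.val.2).card : ℝ) * R s.val.1
       < ((dyadicI m u.val.1 u.val.2 ∩ dyadicI m t.val.1 t.val.2).card : ℝ) * R u.val.1) :
    dist (xvec m u.val.1 u.val.2) (xvec m t.val.1 t.val.2) <
      dist (xvec m s.val.1 s.val.2) (xvec m t.val.1 t.val.2) := by
  apply lt_of_pow_lt_pow_left₀ 2 dist_nonneg
  rw [dist_sq_xvec (vert_bound u) (vert_bound t), dist_sq_xvec (vert_bound s) (vert_bound t)]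
  have hRt := R_pos t.val.1
  nlinarith [mul_lt_mul_of_pos_right h hRt]

end S4

open S4

/-- the tree-plus-ancestor graph on the Euclidean binary tree pointset
(`n = 2^m`) is 1-navigable under the Euclidean metric and has max out-degree
at most `log₂ n + 1 = m + 1`. -/
theorem stmt4 (m : ℕ) :
    (∀ s t : BTVertex m, s ≠ t →
      ∃ u : BTVertex m, BTEdge m s u ∧
        dist (xvec m u.val.1 u.val.2) (xvec m t.val.1 t.val.2) <
          dist (xvec m s.val.1 s.val.2) (xvec m t.val.1 t.val.2)) ∧
    (∀ s : BTVertex m, {u : BTVertex m | BTEdge m s u}.ncard ≤ m + 1) := by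
  constructor
  · intro s t hst
    by_cases h1 : dyadicI m s.val.1 s.val.2 ⊆ dyadicI m t.val.1 t.val.2
    · -- Case A: t is an ancestor of s; jump directly to t.
      have hne : dyadicI m s.val.1 s.val.2 ≠ dyadicI m t.val.1 t.val.2 :=
        fun he => hst (dyadic_inj s t he)
      have hss : dyadicI m s.val.1 s.val.2 ⊂ dyadicI m t.val.1 t.val.2 :=
        Finset.ssubset_iff_subset_ne.mpr ⟨h1, hne⟩
      have hlt : s.val.1 < t.val.1 := by
        have hc := Finset.card_lt_card hss
        rw [card_dyadicI (vert_bound s), card_dyadicI (vert_bound t)] at hc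
        exact (Nat.pow_lt_pow_iff_right (by norm_num)).mp hc
      refine ⟨t, Or.inr hss, key_lt s t t ?_⟩
      rw [Finset.inter_eq_left.mpr h1, Finset.inter_self,
        card_dyadicI (vert_bound s), card_dyadicI (vert_bound t), pow_mul_R, pow_mul_R]
      apply (Real.rpow_lt_rpow_left_iff (by norm_num)).mpr
      have : (s.val.1 : ℝ) < t.val.1 := by exact_mod_cast hlt
      linarith
    · by_cases h2 : dyadicI m t.val.1 t.val.2 ⊆ dyadicI m s.val.1 s.val.2
      · -- Case B: t is a descendant of s; go to the child of s containing t.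
        have hne : dyadicI m t.val.1 t.val.2 ≠ dyadicI m s.val.1 s.val.2 :=
          fun he => hst (dyadic_inj t s he).symm
        have hlt : t.val.1 < s.val.1 := by
          have hc := Finset.card_le_card h2
          rw [card_dyadicI (vert_bound t), card_dyadicI (vert_bound s)] at hc
          have hle : t.val.1 ≤ s.val.1 := (Nat.pow_le_pow_iff_right (by norm_num)).mp hc
          rcases lt_or_eq_of_le hle with h | h
          · exact h
          · exfalso
            apply hne
            apply Finset.eq_of_subset_of_card_le h2
            rw [card_dyadicI (vert_bound t), card_dyadicI (vert_bound s), h]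
        have hi0m : t.val.2 * 2^t.val.1 < 2^m := base_lt t
        have hjuv : t.val.2 * 2^t.val.1 / 2^(s.val.1 - 1) < 2^(m - (s.val.1 - 1)) := by
          rw [Nat.div_lt_iff_lt_mul (pow_pos (by norm_num) _), ← pow_add,
            Nat.sub_add_cancel (by have := s.property.1; omega)]
          exact hi0m
        refine ⟨⟨(s.val.1 - 1, t.val.2 * 2^t.val.1 / 2^(s.val.1 - 1)),
          by have := s.property.1; omega, hjuv⟩, ?_, ?_⟩
        · -- the edge: child edge
          refine Or.inl ⟨show s.val.1 - 1 + 1 = s.val.1 by omega, ?_⟩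
          exact subset_of_mem_mem (p := ⟨(s.val.1 - 1, _), by have := s.property.1; omega, hjuv⟩)
            (show s.val.1 - 1 ≤ s.val.1 by omega)
            (by rw [mem_dyadicI]) (h2 (base_mem t))
        · apply key_lt
          have hi0u : (⟨t.val.2 * 2^t.val.1, hi0m⟩ : Fin (2^m)) ∈
              dyadicI m (s.val.1-1) (t.val.2 * 2^t.val.1 / 2^(s.val.1 - 1)) := by
            rw [mem_dyadicI]
          have htu : dyadicI m t.val.1 t.val.2 ⊆
              dyadicI m (s.val.1-1) (t.val.2 * 2^t.val.1 / 2^(s.val.1 - 1)) :=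
            subset_of_mem_mem (p := t) (q := ⟨(s.val.1 - 1, _), by have := s.property.1; omega, hjuv⟩)
              (show t.val.1 ≤ s.val.1 - 1 by omega) (base_mem t) hi0u
          rw [Finset.inter_eq_right.mpr h2, Finset.inter_eq_right.mpr htu,
            card_dyadicI (vert_bound t)]
          apply mul_lt_mul_of_pos_left
          · apply (Real.rpow_lt_rpow_left_iff (by norm_num)).mpr
            have h1' : ((s.val.1 - 1 : ℕ) : ℝ) < s.val.1 := by
              have : s.val.1 - 1 < s.val.1 := by omega
              exact_mod_cast this
            linarith
          · positivity
      · -- Case C: disjoint; go to the root.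
        have hroot : ∀ x : Fin (2^m), x ∈ dyadicI m m 0 := by
          intro x; rw [mem_dyadicI]; exact Nat.div_eq_of_lt x.isLt
        have hsub : dyadicI m s.val.1 s.val.2 ⊆ dyadicI m m 0 := fun x _ => hroot x
        have hne : dyadicI m s.val.1 s.val.2 ≠ dyadicI m m 0 := by
          intro he
          apply h2
          rw [he]
          exact fun x _ => hroot x
        refine ⟨⟨(m, 0), le_refl m, by simp⟩,
          Or.inr (Finset.ssubset_iff_subset_ne.mpr ⟨hsub, hne⟩), ?_⟩
        apply key_lt
        have hdisj : dyadicI m s.val.1 s.val.2 ∩ dyadicI m t.val.1 t.val.2 = ∅ := by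
          rw [Finset.eq_empty_iff_forall_notMem]
          intro x hx
          rw [Finset.mem_inter] at hx
          rcases le_total s.val.1 t.val.1 with hle | hle
          · exact h1 (subset_of_mem_mem hle hx.1 hx.2)
          · exact h2 (subset_of_mem_mem hle hx.2 hx.1)
        have hrt : dyadicI m m 0 ∩ dyadicI m t.val.1 t.val.2 = dyadicI m t.val.1 t.val.2 :=
          Finset.inter_eq_right.mpr (fun x _ => hroot x)
        rw [hdisj, hrt, card_dyadicI (vert_bound t)]
        simp only [Finset.card_empty, Nat.cast_zero, zero_mul]
        have := R_pos m
        positivity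
  · -- Degree bound
    intro s
    have hanc : ∀ u : BTVertex m, dyadicI m s.val.1 s.val.2 ⊂ dyadicI m u.val.1 u.val.2 →
        s.val.1 < u.val.1 ∧ u.val.2 = s.val.2 * 2^s.val.1 / 2^u.val.1 := by
      intro u hss
      constructor
      · have hc := Finset.card_lt_card hss
        rw [card_dyadicI (vert_bound s), card_dyadicI (vert_bound u)] at hc
        exact (Nat.pow_lt_pow_iff_right (by norm_num)).mp hc
      · have hm' := hss.1 (base_mem s)
        rw [mem_dyadicI] at hm'
        exact hm'.symm
    have hchild : ∀ u : BTVertex m, u.val.1 + 1 = s.val.1 →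
        dyadicI m u.val.1 u.val.2 ⊆ dyadicI m s.val.1 s.val.2 →
        u.val.2 / 2 = s.val.2 := by
      intro u h1 hsub
      have hm' := hsub (base_mem u)
      rw [mem_dyadicI, ← h1, pow_succ, ← Nat.div_div_eq_div_mul, base_div u] at hm'
      exact hm'
    have step := Set.ncard_le_ncard_of_injOn
      (s := {u : BTVertex m | BTEdge m s u}) (t := (↑(Finset.Iic m) : Set ℕ))
      (fun u : BTVertex m => if u.val.1 < s.val.1 then u.val.1 + u.val.2 % 2 else u.val.1)
      (fun u hu => by
        simp only [Finset.coe_Iic, Set.mem_Iic]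
        rcases hu with ⟨h1, hsub⟩ | hss
        · rw [if_pos (by omega)]
          have := s.property.1
          have := Nat.mod_lt u.val.2 (show 0 < 2 by norm_num)
          omega
        · rw [if_neg (by have := (hanc u hss).1; omega)]
          exact u.property.1)
      (by
        intro u1 hu1 u2 hu2 heq
        dsimp only at heq
        rcases hu1 with ⟨h1a, hsub1⟩ | hss1 <;> rcases hu2 with ⟨h2a, hsub2⟩ | hss2
        · rw [if_pos (by omega), if_pos (by omega)] at heq
          have e1 := hchild u1 h1a hsub1
          have e2 := hchild u2 h2a hsub2
          exact Subtype.ext (Prod.ext (by omega) (by omega))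
        · have := (hanc u2 hss2).1
          rw [if_pos (by omega), if_neg (by omega)] at heq
          exfalso; omega
        · have := (hanc u1 hss1).1
          rw [if_neg (by omega), if_pos (by omega)] at heq
          exfalso; omega
        · obtain ⟨hl1, hj1⟩ := hanc u1 hss1
          obtain ⟨hl2, hj2⟩ := hanc u2 hss2
          rw [if_neg (by omega), if_neg (by omega)] at heq
          refine Subtype.ext (Prod.ext heq ?_)
          rw [hj1, hj2, heq])
      (Finset.finite_toSet _)
    rw [Set.ncard_coe_finset, Nat.card_Iic] at step
    exact step
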